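/- (Golay-pair closure under array expansion.) Let N, M ≥ 1, let (u, v) be a Golay complementary pair of unimodular sequences of length N, and let (w_PA, w_PB) be a Golay complementary pair of unimodular sequences of length M. Define sequences w_A, w_B of length 2NM by: for 0 ≤ l ≤ N−1 and 0 ≤ m ≤ M−1, w_A(lM+m) = u(l)·w_PA(m), w_A(NM+lM+m) = −v(l)·conj(w_PB(M−1−m)), w_B(lM+m) = u(l)·w_PB(m), w_B(NM+lM+m) = v(l)·conj(w_PA(M−1−m)). Then (w_A, w_B) is itself a Golay complementary pair of unimodular sequences of length 2NM. -/

import Mathlib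

/-- The array factor of a length-`M` sequence `u` at spatial frequency `ψ`:
`F_u(ψ) = Σ_{m=0}^{M-1} u(m) · exp(i·m·ψ)`. -/
noncomputable def arrayFactor (M : ℕ) (u : ℕ → ℂ) (ψ : ℝ) : ℂ :=
  ∑ m ∈ Finset.range M, u m * Complex.exp (Complex.I * (m : ℂ) * (ψ : ℂ))

/-- The aperiodic autocorrelation of a length-`M` sequence `u` at shift `τ`:
`R_u(τ) = Σ_{m=0}^{M-1-τ} u(m) · conj(u(m+τ))`. -/
noncomputable def aacf (M : ℕ) (u : ℕ → ℂ) (τ : ℕ) : ℂ :=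
  ∑ m ∈ Finset.range (M - τ), u m * (starRingEnd ℂ) (u (m + τ))

section GolayAux
open Finset

private lemma sum_range_double (N M : ℕ) (f : ℕ → ℂ) :
    ∑ i ∈ range (N*M), f i = ∑ l ∈ range N, ∑ m ∈ range M, f (l*M+m) := by
  induction N with
  | zero => simp
  | succ n ih =>
    rw [show (n+1)*M = n*M + M by ring, Finset.sum_range_add, ih, Finset.sum_range_succ]

private lemma sum_ite_lt (n k : ℕ) (hk : k ≤ n) (f : ℕ → ℂ) :
    ∑ i ∈ range n, (if i < k then f i else 0) = ∑ i ∈ range k, f i := by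
  have h1 : ∑ i ∈ range k, (if i < k then f i else 0) = ∑ i ∈ range k, f i :=
    Finset.sum_congr rfl (fun i hi => by rw [if_pos (mem_range.mp hi)])
  calc ∑ i ∈ range n, (if i < k then f i else 0)
      = ∑ i ∈ range (k + (n-k)), (if i < k then f i else 0) := by
        rw [Nat.add_sub_cancel' hk]
    _ = ∑ i ∈ range k, f i := by
        rw [Finset.sum_range_add, h1]
        have h2 : ∑ i ∈ range (n-k), (if k + i < k then f (k+i) else 0) = 0 :=
          Finset.sum_eq_zero (fun i _ => by rw [if_neg (by omega)])
        rw [h2, add_zero]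

private lemma sum_ite_ge (n k : ℕ) (hk : k ≤ n) (f : ℕ → ℂ) :
    ∑ i ∈ range n, (if k ≤ i then f i else 0) = ∑ i ∈ range (n-k), f (k+i) := by
  calc ∑ i ∈ range n, (if k ≤ i then f i else 0)
      = ∑ i ∈ range (k + (n-k)), (if k ≤ i then f i else 0) := by
        rw [Nat.add_sub_cancel' hk]
    _ = ∑ i ∈ range (n-k), f (k+i) := by
        rw [Finset.sum_range_add]
        have h1 : ∑ i ∈ range k, (if k ≤ i then f i else 0) = 0 :=
          Finset.sum_eq_zero (fun i hi => by rw [if_neg (by simpa using mem_range.mp hi)])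
        have h2 : ∑ i ∈ range (n-k), (if k ≤ k + i then f (k+i) else 0)
            = ∑ i ∈ range (n-k), f (k+i) :=
          Finset.sum_congr rfl (fun i _ => by rw [if_pos (by omega)])
        rw [h1, h2, zero_add]

private lemma block_lt_iff (N M a r : ℕ) (hr : r < M) : a*M + r < N*M ↔ a < N := by
  constructor
  · intro h
    by_contra hc
    push_neg at hc
    have := Nat.mul_le_mul_right M hc
    omega
  · intro h
    have h1 : (a+1)*M ≤ N*M := Nat.mul_le_mul_right M h
    have h2 : (a+1)*M = a*M + M := by ring
    omega

private lemma eq_zero_of_eq_neg {S : ℂ} (h : S = -S) : S = 0 := by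
  have h2 : (2:ℂ) * S = 0 := by linear_combination h
  exact (mul_eq_zero.mp h2).resolve_left two_ne_zero

private lemma Xsum (M t : ℕ) (ht : t < M) (pA pB : ℕ → ℂ) :
    ∑ m ∈ range (M-t), (pB m * pA (M-1-(m+t)) - pA m * pB (M-1-(m+t))) = 0 := by
  apply eq_zero_of_eq_neg
  have h := Finset.sum_range_reflect
    (fun m => pB m * pA (M-1-(m+t)) - pA m * pB (M-1-(m+t))) (M-t)
  conv_lhs => rw [← h]
  rw [← Finset.sum_neg_distrib]
  apply Finset.sum_congr rfl
  intro m hm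
  rw [mem_range] at hm
  rw [show M-1-((M-t-1-m)+t) = m by omega, show M-t-1-m = M-1-(m+t) by omega]
  ring

private lemma Xsum' (M t : ℕ) (ht : t ≤ M) (pA pB : ℕ → ℂ) :
    ∑ m ∈ range t, (pB ((M-t)+m) * pA (M-1-m) - pA ((M-t)+m) * pB (M-1-m)) = 0 := by
  apply eq_zero_of_eq_neg
  have h := Finset.sum_range_reflect
    (fun m => pB ((M-t)+m) * pA (M-1-m) - pA ((M-t)+m) * pB (M-1-m)) t
  conv_lhs => rw [← h]
  rw [← Finset.sum_neg_distrib]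
  apply Finset.sum_congr rfl
  intro m hm
  rw [mem_range] at hm
  rw [show (M-t)+(t-1-m) = M-1-m by omega, show M-1-(t-1-m) = (M-t)+m by omega]
  ring

private lemma Qsum_eq (M t : ℕ) (ht : t < M) (pA pB : ℕ → ℂ) :
    ∑ m ∈ range (M-t), ((starRingEnd ℂ) (pB (M-1-m)) * pB (M-1-(m+t))
        + (starRingEnd ℂ) (pA (M-1-m)) * pA (M-1-(m+t)))
      = ∑ m ∈ range (M-t), (pA m * (starRingEnd ℂ) (pA (m+t))
        + pB m * (starRingEnd ℂ) (pB (m+t))) := by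
  conv_lhs => rw [← Finset.sum_range_reflect]
  apply Finset.sum_congr rfl
  intro m hm
  rw [mem_range] at hm
  rw [show M-1-(M-t-1-m) = m+t by omega, show M-1-((M-t-1-m)+t) = m by omega]
  ring

private lemma Qsum_eq' (M t : ℕ) (ht : t ≤ M) (pA pB : ℕ → ℂ) :
    ∑ m ∈ range t, ((starRingEnd ℂ) (pB (M-1-((M-t)+m))) * pB (M-1-m)
        + (starRingEnd ℂ) (pA (M-1-((M-t)+m))) * pA (M-1-m))
      = ∑ m ∈ range t, (pA ((M-t)+m) * (starRingEnd ℂ) (pA m)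
        + pB ((M-t)+m) * (starRingEnd ℂ) (pB m)) := by
  conv_lhs => rw [← Finset.sum_range_reflect]
  apply Finset.sum_congr rfl
  intro m hm
  rw [mem_range] at hm
  rw [show M-1-((M-t)+(t-1-m)) = m by omega, show M-1-(t-1-m) = (M-t)+m by omega]
  ring

private lemma cond_iff (N M l s m t L τ : ℕ) (hL : N*M = L) (hst : τ = s*M+t)
    (hmt : m+t < M) (hτL : τ ≤ L) : (l*M+m < L-τ ↔ l < N-s) := by
  have h1 := block_lt_iff N M (l+s) (m+t) hmt
  have h2 : (l+s)*M = l*M + s*M := by ring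
  omega

private lemma cond_iff' (N M l s m t L τ : ℕ) (hL : N*M = L) (hst : τ = s*M+t)
    (hm : m < t) (ht : t < M) (hτL : τ ≤ L) :
    (l*M+((M-t)+m) < L-τ ↔ l < N-(s+1)) := by
  have h1 := block_lt_iff N M (l+s+1) m (by omega)
  have h2 : (l+s+1)*M = l*M + s*M + M := by ring
  omega

end GolayAux

/-- Golay-pair closure under array expansion: expanding a Golay complementary pair
of protoarray weights by a Golay complementary pair of expanders yields again a
Golay complementary pair of unimodular sequences, of length `2NM`. -/
theorem golay_pair_closure_expansion (N M : ℕ) (hN : 1 ≤ N) (hM : 1 ≤ M)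
    (u v wPA wPB wA wB : ℕ → ℂ)
    (hu : ∀ l < N, ‖u l‖ = 1) (hv : ∀ l < N, ‖v l‖ = 1)
    (hGolayuv : ∀ τ, 1 ≤ τ → τ < N → aacf N u τ + aacf N v τ = 0)
    (hwPA : ∀ m < M, ‖wPA m‖ = 1)
    (hwPB : ∀ m < M, ‖wPB m‖ = 1)
    (hGolayP : ∀ τ, 1 ≤ τ → τ < M → aacf M wPA τ + aacf M wPB τ = 0)
    (hA1 : ∀ l < N, ∀ m < M, wA (l * M + m) = u l * wPA m)
    (hA2 : ∀ l < N, ∀ m < M,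
      wA (N * M + l * M + m) = -(v l * (starRingEnd ℂ) (wPB (M - 1 - m))))
    (hB1 : ∀ l < N, ∀ m < M, wB (l * M + m) = u l * wPB m)
    (hB2 : ∀ l < N, ∀ m < M,
      wB (N * M + l * M + m) = v l * (starRingEnd ℂ) (wPA (M - 1 - m))) :
    (∀ m < 2 * N * M, ‖wA m‖ = 1 ∧ ‖wB m‖ = 1) ∧
      (∀ τ, 1 ≤ τ → τ < 2 * N * M →
        aacf (2 * N * M) wA τ + aacf (2 * N * M) wB τ = 0) := by
  have hM0 : 0 < M := hM
  constructor
  · -- unimodularity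
    intro i hi
    rw [show 2*N*M = N*M + N*M by ring] at hi
    by_cases h : i < N*M
    · have hr : i % M < M := Nat.mod_lt _ hM0
      have hl : i / M < N := (Nat.div_lt_iff_lt_mul hM0).mpr h
      have e : i = i / M * M + i % M := by
        rw [mul_comm]; exact (Nat.div_add_mod i M).symm
      constructor
      · rw [e, hA1 _ hl _ hr, norm_mul, hu _ hl, hwPA _ hr, mul_one]
      · rw [e, hB1 _ hl _ hr, norm_mul, hu _ hl, hwPB _ hr, mul_one]
    · push_neg at h
      have hkL : i - N*M < N*M := by omega
      have hr : (i - N*M) % M < M := Nat.mod_lt _ hM0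
      have hl : (i - N*M) / M < N := (Nat.div_lt_iff_lt_mul hM0).mpr hkL
      have e : i = N*M + (i - N*M)/M * M + (i - N*M)%M := by
        have e1 : (i - N*M)/M*M + (i - N*M)%M = i - N*M := by
          rw [mul_comm]; exact Nat.div_add_mod _ M
        omega
      have h1 : M - 1 - (i - N*M)%M < M := by omega
      constructor
      · rw [e, hA2 _ hl _ hr, norm_neg, norm_mul, Complex.norm_conj,
            hv _ hl, hwPB _ h1, mul_one]
      · rw [e, hB2 _ hl _ hr, norm_mul, Complex.norm_conj, hv _ hl, hwPA _ h1, mul_one]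
  · -- Golay property
    intro τ hτ1 hτ2
    rw [show 2*N*M = N*M + N*M by ring] at hτ2 ⊢
    set L := N*M with hL
    have zuv : ∀ s', 1 ≤ s' → aacf N u s' + aacf N v s' = 0 := by
      intro s' hs'
      by_cases h : s' < N
      · exact hGolayuv s' hs' h
      · unfold aacf
        rw [show N - s' = 0 by omega]
        simp
    unfold aacf
    rw [← Finset.sum_add_distrib]
    set F : ℕ → ℂ := fun i =>
      wA i * (starRingEnd ℂ) (wA (i + τ)) + wB i * (starRingEnd ℂ) (wB (i + τ)) with hF
    by_cases hcase : τ < L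
    · -- τ < L
      obtain ⟨s, t, hst, ht, hs⟩ : ∃ s t, τ = s*M+t ∧ t < M ∧ s < N := by
        refine ⟨τ/M, τ%M, ?_, Nat.mod_lt _ hM0, ?_⟩
        · rw [mul_comm]; exact (Nat.div_add_mod τ M).symm
        · exact (Nat.div_lt_iff_lt_mul hM0).mpr (by omega)
      have split3 : ∀ (f : ℕ → ℂ), ∑ i ∈ Finset.range (L+L-τ), f i
          = ((∑ i ∈ Finset.range (L-τ), f i) + (∑ i ∈ Finset.range τ, f ((L-τ)+i)))
            + (∑ i ∈ Finset.range (L-τ), f (L+i)) := by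
        intro f
        rw [show L+L-τ = (L-τ)+τ+(L-τ) by omega, Finset.sum_range_add, Finset.sum_range_add]
        congr 1
        apply Finset.sum_congr rfl
        intro i _
        congr 1
        omega
      rw [split3]
      -- the middle (cross) block vanishes
      have hS2 : ∑ i ∈ Finset.range τ, F ((L-τ)+i) = 0 := by
        have h1 := sum_ite_ge L (L-τ) (by omega) F
        rw [show L-(L-τ) = τ by omega] at h1
        rw [← h1]
        have hdd := sum_range_double N M (fun i => if L-τ ≤ i then F i else 0)
        rw [← hL] at hdd
        rw [hdd, Finset.sum_comm]
        have hsplit := Finset.sum_range_add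
          (fun m => ∑ l ∈ Finset.range N, if L-τ ≤ l*M+m then F (l*M+m) else 0) (M-t) t
        rw [show M-t+t = M by omega] at hsplit
        rw [hsplit]
        have part1 : ∑ m ∈ Finset.range (M-t), ∑ l ∈ Finset.range N,
            (if L-τ ≤ l*M+m then F (l*M+m) else 0) = 0 := by
          have inner1 : ∀ m ∈ Finset.range (M-t),
              (∑ l ∈ Finset.range N, if L-τ ≤ l*M+m then F (l*M+m) else 0)
              = (∑ l ∈ Finset.range s, u ((N-s)+l) * (starRingEnd ℂ) (v l))
                * (wPB m * wPA (M-1-(m+t)) - wPA m * wPB (M-1-(m+t))) := by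
            intro m hm
            rw [Finset.mem_range] at hm
            have hcong : ∀ l ∈ Finset.range N,
                (if L-τ ≤ l*M+m then F (l*M+m) else 0)
                = (if N-s ≤ l then F (l*M+m) else 0) := by
              intro l _
              have hiff := cond_iff N M l s m t L τ hL.symm hst (by omega) (by omega)
              exact if_congr (by omega) rfl rfl
            rw [Finset.sum_congr rfl hcong, sum_ite_ge N (N-s) (by omega),
                show N-(N-s) = s by omega]
            have heval : ∀ l ∈ Finset.range s,
                F (((N-s)+l)*M+m)
                = (u ((N-s)+l) * (starRingEnd ℂ) (v l))
                  * (wPB m * wPA (M-1-(m+t)) - wPA m * wPB (M-1-(m+t))) := by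
              intro l hl
              rw [Finset.mem_range] at hl
              have e1 : ((N-s)+l)*M+m+τ = L+l*M+(m+t) := by
                have a1 : ((N-s)+l)*M = (N-s)*M + l*M := by ring
                have a2 : (N-s)*M + s*M = N*M := by
                  rw [← add_mul]; congr 1; omega
                omega
              simp only [hF]
              rw [e1, hA1 ((N-s)+l) (by omega) m (by omega),
                  hA2 l (by omega) (m+t) (by omega),
                  hB1 ((N-s)+l) (by omega) m (by omega),
                  hB2 l (by omega) (m+t) (by omega)]
              simp only [map_mul, map_neg, Complex.conj_conj]
              ring
            rw [Finset.sum_congr rfl heval, ← Finset.sum_mul]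
          rw [Finset.sum_congr rfl inner1, ← Finset.mul_sum,
              Xsum M t ht wPA wPB, mul_zero]
        have part2 : ∑ m ∈ Finset.range t, ∑ l ∈ Finset.range N,
            (if L-τ ≤ l*M+((M-t)+m) then F (l*M+((M-t)+m)) else 0) = 0 := by
          have inner2 : ∀ m ∈ Finset.range t,
              (∑ l ∈ Finset.range N, if L-τ ≤ l*M+((M-t)+m) then F (l*M+((M-t)+m)) else 0)
              = (∑ l ∈ Finset.range (s+1), u ((N-(s+1))+l) * (starRingEnd ℂ) (v l))
                * (wPB ((M-t)+m) * wPA (M-1-m) - wPA ((M-t)+m) * wPB (M-1-m)) := by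
            intro m hm
            rw [Finset.mem_range] at hm
            have hcong : ∀ l ∈ Finset.range N,
                (if L-τ ≤ l*M+((M-t)+m) then F (l*M+((M-t)+m)) else 0)
                = (if N-(s+1) ≤ l then F (l*M+((M-t)+m)) else 0) := by
              intro l _
              have hiff := cond_iff' N M l s m t L τ hL.symm hst hm ht (by omega)
              exact if_congr (by omega) rfl rfl
            rw [Finset.sum_congr rfl hcong, sum_ite_ge N (N-(s+1)) (by omega),
                show N-(N-(s+1)) = s+1 by omega]
            have heval : ∀ l ∈ Finset.range (s+1),
                F (((N-(s+1))+l)*M+((M-t)+m))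
                = (u ((N-(s+1))+l) * (starRingEnd ℂ) (v l))
                  * (wPB ((M-t)+m) * wPA (M-1-m) - wPA ((M-t)+m) * wPB (M-1-m)) := by
              intro l hl
              rw [Finset.mem_range] at hl
              have e1 : ((N-(s+1))+l)*M+((M-t)+m)+τ = L+l*M+m := by
                have a1 : ((N-(s+1))+l)*M = (N-(s+1))*M + l*M := by ring
                have a2 : (N-(s+1))*M + (s+1)*M = N*M := by
                  rw [← add_mul]; congr 1; omega
                have a3 : (s+1)*M = s*M + M := by ring
                omega
              simp only [hF]
              rw [e1, hA1 ((N-(s+1))+l) (by omega) ((M-t)+m) (by omega),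
                  hA2 l (by omega) m (by omega),
                  hB1 ((N-(s+1))+l) (by omega) ((M-t)+m) (by omega),
                  hB2 l (by omega) m (by omega)]
              simp only [map_mul, map_neg, Complex.conj_conj]
              ring
            rw [Finset.sum_congr rfl heval, ← Finset.sum_mul]
          rw [Finset.sum_congr rfl inner2, ← Finset.mul_sum,
              Xsum' M t (le_of_lt ht) wPA wPB, mul_zero]
        rw [part1, part2, add_zero]
      -- the two pure blocks cancel jointly
      have hS13 : (∑ i ∈ Finset.range (L-τ), F i) + (∑ i ∈ Finset.range (L-τ), F (L+i)) = 0 := by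
        rw [← Finset.sum_add_distrib]
        rw [← sum_ite_lt L (L-τ) (by omega) (fun i => F i + F (L+i))]
        have hdd := sum_range_double N M (fun i => if i < L-τ then F i + F (L+i) else 0)
        rw [← hL] at hdd
        rw [hdd, Finset.sum_comm]
        have hsplit := Finset.sum_range_add
          (fun m => ∑ l ∈ Finset.range N,
            if l*M+m < L-τ then F (l*M+m) + F (L+(l*M+m)) else 0) (M-t) t
        rw [show M-t+t = M by omega] at hsplit
        rw [hsplit]
        have inner1 : ∀ m ∈ Finset.range (M-t),
            (∑ l ∈ Finset.range N, if l*M+m < L-τ then F (l*M+m) + F (L+(l*M+m)) else 0)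
            = (wPA m * (starRingEnd ℂ) (wPA (m+t)) + wPB m * (starRingEnd ℂ) (wPB (m+t)))
                * aacf N u s
              + ((starRingEnd ℂ) (wPB (M-1-m)) * wPB (M-1-(m+t))
                 + (starRingEnd ℂ) (wPA (M-1-m)) * wPA (M-1-(m+t))) * aacf N v s := by
          intro m hm
          rw [Finset.mem_range] at hm
          have hcong : ∀ l ∈ Finset.range N,
              (if l*M+m < L-τ then F (l*M+m) + F (L+(l*M+m)) else 0)
              = (if l < N-s then
                  u l * (starRingEnd ℂ) (u (l+s))
                    * (wPA m * (starRingEnd ℂ) (wPA (m+t)) + wPB m * (starRingEnd ℂ) (wPB (m+t)))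
                  + v l * (starRingEnd ℂ) (v (l+s))
                    * ((starRingEnd ℂ) (wPB (M-1-m)) * wPB (M-1-(m+t))
                       + (starRingEnd ℂ) (wPA (M-1-m)) * wPA (M-1-(m+t)))
                 else 0) := by
            intro l _
            have hiff := cond_iff N M l s m t L τ hL.symm hst (by omega) (by omega)
            by_cases hc : l < N-s
            · rw [if_pos (hiff.mpr hc), if_pos hc]
              simp only [hF]
              rw [show l*M+m+τ = (l+s)*M+(m+t) by rw [hst]; ring,
                  show L+(l*M+m) = L+l*M+m by ring]
              rw [show L+l*M+m+τ = L+(l+s)*M+(m+t) by rw [hst]; ring]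
              rw [hA1 l (by omega) m (by omega), hA1 (l+s) (by omega) (m+t) (by omega),
                  hA2 l (by omega) m (by omega), hA2 (l+s) (by omega) (m+t) (by omega),
                  hB1 l (by omega) m (by omega), hB1 (l+s) (by omega) (m+t) (by omega),
                  hB2 l (by omega) m (by omega), hB2 (l+s) (by omega) (m+t) (by omega)]
              simp only [map_mul, map_neg, Complex.conj_conj]
              ring
            · rw [if_neg (fun h => hc (hiff.mp h)), if_neg hc]
          rw [Finset.sum_congr rfl hcong, sum_ite_lt N (N-s) (by omega),
              Finset.sum_add_distrib, ← Finset.sum_mul, ← Finset.sum_mul]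
          simp only [aacf]
          ring
        have inner2 : ∀ m ∈ Finset.range t,
            (∑ l ∈ Finset.range N,
              if l*M+((M-t)+m) < L-τ then F (l*M+((M-t)+m)) + F (L+(l*M+((M-t)+m))) else 0)
            = (wPA ((M-t)+m) * (starRingEnd ℂ) (wPA m) + wPB ((M-t)+m) * (starRingEnd ℂ) (wPB m))
                * aacf N u (s+1)
              + ((starRingEnd ℂ) (wPB (M-1-((M-t)+m))) * wPB (M-1-m)
                 + (starRingEnd ℂ) (wPA (M-1-((M-t)+m))) * wPA (M-1-m)) * aacf N v (s+1) := by
          intro m hm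
          rw [Finset.mem_range] at hm
          have hcong : ∀ l ∈ Finset.range N,
              (if l*M+((M-t)+m) < L-τ then F (l*M+((M-t)+m)) + F (L+(l*M+((M-t)+m))) else 0)
              = (if l < N-(s+1) then
                  u l * (starRingEnd ℂ) (u (l+(s+1)))
                    * (wPA ((M-t)+m) * (starRingEnd ℂ) (wPA m)
                       + wPB ((M-t)+m) * (starRingEnd ℂ) (wPB m))
                  + v l * (starRingEnd ℂ) (v (l+(s+1)))
                    * ((starRingEnd ℂ) (wPB (M-1-((M-t)+m))) * wPB (M-1-m)
                       + (starRingEnd ℂ) (wPA (M-1-((M-t)+m))) * wPA (M-1-m))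
                 else 0) := by
            intro l _
            have hiff := cond_iff' N M l s m t L τ hL.symm hst hm ht (by omega)
            by_cases hc : l < N-(s+1)
            · rw [if_pos (hiff.mpr hc), if_pos hc]
              simp only [hF]
              have e1 : l*M+((M-t)+m)+τ = (l+(s+1))*M+m := by
                have a1 : (l+(s+1))*M = l*M+s*M+M := by ring
                omega
              have e2 : L+(l*M+((M-t)+m)) = L+l*M+((M-t)+m) := by ring
              have e3 : L+l*M+((M-t)+m)+τ = L+(l+(s+1))*M+m := by
                have a1 : (l+(s+1))*M = l*M+s*M+M := by ring
                omega
              rw [e1, e2, e3]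
              rw [hA1 l (by omega) ((M-t)+m) (by omega),
                  hA1 (l+(s+1)) (by omega) m (by omega),
                  hA2 l (by omega) ((M-t)+m) (by omega),
                  hA2 (l+(s+1)) (by omega) m (by omega),
                  hB1 l (by omega) ((M-t)+m) (by omega),
                  hB1 (l+(s+1)) (by omega) m (by omega),
                  hB2 l (by omega) ((M-t)+m) (by omega),
                  hB2 (l+(s+1)) (by omega) m (by omega)]
              simp only [map_mul, map_neg, Complex.conj_conj]
              ring
            · rw [if_neg (fun h => hc (hiff.mp h)), if_neg hc]
          rw [Finset.sum_congr rfl hcong, sum_ite_lt N (N-(s+1)) (by omega),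
              Finset.sum_add_distrib, ← Finset.sum_mul, ← Finset.sum_mul]
          simp only [aacf]
          ring
        rw [Finset.sum_congr rfl inner1, Finset.sum_congr rfl inner2,
            Finset.sum_add_distrib, Finset.sum_add_distrib,
            ← Finset.sum_mul, ← Finset.sum_mul, ← Finset.sum_mul, ← Finset.sum_mul,
            Qsum_eq M t ht wPA wPB, Qsum_eq' M t (le_of_lt ht) wPA wPB]
        have hP : ∑ m ∈ Finset.range (M-t),
            (wPA m * (starRingEnd ℂ) (wPA (m+t)) + wPB m * (starRingEnd ℂ) (wPB (m+t)))
            = aacf M wPA t + aacf M wPB t := by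
          rw [Finset.sum_add_distrib]; rfl
        rw [hP]
        have hz1 : aacf N u (s+1) + aacf N v (s+1) = 0 := zuv (s+1) (by omega)
        have hz0 : (aacf M wPA t + aacf M wPB t) * (aacf N u s + aacf N v s) = 0 := by
          rcases Nat.eq_zero_or_pos s with h0 | h0
          · subst h0
            simp only [Nat.zero_mul, Nat.zero_add] at hst
            rw [← hst, hGolayP τ hτ1 (by omega), zero_mul]
          · rw [zuv s h0, mul_zero]
        linear_combination hz0 + (∑ m ∈ Finset.range t,
          (wPA ((M-t)+m) * (starRingEnd ℂ) (wPA m)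
            + wPB ((M-t)+m) * (starRingEnd ℂ) (wPB m))) * hz1
      rw [hS2]
      linear_combination hS13
    · -- τ ≥ L
      push_neg at hcase
      obtain ⟨s, t, hst, ht, hs⟩ : ∃ s t, τ = L + (s*M+t) ∧ t < M ∧ s < N := by
        refine ⟨(τ-L)/M, (τ-L)%M, ?_, Nat.mod_lt _ hM0, ?_⟩
        · have h1 : (τ-L)/M*M = M*((τ-L)/M) := by ring
          have := Nat.div_add_mod (τ-L) M
          omega
        · exact (Nat.div_lt_iff_lt_mul hM0).mpr (by omega)
      have hconv := sum_ite_lt L (L+L-τ) (by omega) F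
      rw [← hconv]
      have hdd := sum_range_double N M (fun i => if i < L+L-τ then F i else 0)
      rw [← hL] at hdd
      rw [hdd, Finset.sum_comm]
      have hsplit := Finset.sum_range_add
        (fun m => ∑ l ∈ Finset.range N, if l*M+m < L+L-τ then F (l*M+m) else 0) (M-t) t
      rw [show M-t+t = M by omega] at hsplit
      rw [hsplit]
      have part1 : ∑ m ∈ Finset.range (M-t), ∑ l ∈ Finset.range N,
          (if l*M+m < L+L-τ then F (l*M+m) else 0) = 0 := by
        have inner1 : ∀ m ∈ Finset.range (M-t),
            (∑ l ∈ Finset.range N, if l*M+m < L+L-τ then F (l*M+m) else 0)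
            = (∑ l ∈ Finset.range (N-s), u l * (starRingEnd ℂ) (v (l+s)))
              * (wPB m * wPA (M-1-(m+t)) - wPA m * wPB (M-1-(m+t))) := by
          intro m hm
          rw [Finset.mem_range] at hm
          have hcong : ∀ l ∈ Finset.range N,
              (if l*M+m < L+L-τ then F (l*M+m) else 0)
              = (if l < N-s then F (l*M+m) else 0) := by
            intro l _
            have hiff := cond_iff N M l s m t L (τ-L) hL.symm (by omega) (by omega) (by omega)
            exact if_congr (by omega) rfl rfl
          rw [Finset.sum_congr rfl hcong, sum_ite_lt N (N-s) (by omega)]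
          have heval : ∀ l ∈ Finset.range (N-s),
              F (l*M+m)
              = (u l * (starRingEnd ℂ) (v (l+s)))
                * (wPB m * wPA (M-1-(m+t)) - wPA m * wPB (M-1-(m+t))) := by
            intro l hl
            rw [Finset.mem_range] at hl
            have e1 : l*M+m+τ = L+(l+s)*M+(m+t) := by
              have a1 : (l+s)*M = l*M+s*M := by ring
              omega
            simp only [hF]
            rw [e1, hA1 l (by omega) m (by omega),
                hA2 (l+s) (by omega) (m+t) (by omega),
                hB1 l (by omega) m (by omega),
                hB2 (l+s) (by omega) (m+t) (by omega)]
            simp only [map_mul, map_neg, Complex.conj_conj]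
            ring
          rw [Finset.sum_congr rfl heval, ← Finset.sum_mul]
        rw [Finset.sum_congr rfl inner1, ← Finset.mul_sum,
            Xsum M t ht wPA wPB, mul_zero]
      have part2 : ∑ m ∈ Finset.range t, ∑ l ∈ Finset.range N,
          (if l*M+((M-t)+m) < L+L-τ then F (l*M+((M-t)+m)) else 0) = 0 := by
        have inner2 : ∀ m ∈ Finset.range t,
            (∑ l ∈ Finset.range N, if l*M+((M-t)+m) < L+L-τ then F (l*M+((M-t)+m)) else 0)
            = (∑ l ∈ Finset.range (N-(s+1)), u l * (starRingEnd ℂ) (v (l+(s+1))))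
              * (wPB ((M-t)+m) * wPA (M-1-m) - wPA ((M-t)+m) * wPB (M-1-m)) := by
          intro m hm
          rw [Finset.mem_range] at hm
          have hcong : ∀ l ∈ Finset.range N,
              (if l*M+((M-t)+m) < L+L-τ then F (l*M+((M-t)+m)) else 0)
              = (if l < N-(s+1) then F (l*M+((M-t)+m)) else 0) := by
            intro l _
            have hiff := cond_iff' N M l s m t L (τ-L) hL.symm (by omega) hm ht (by omega)
            exact if_congr (by omega) rfl rfl
          rw [Finset.sum_congr rfl hcong, sum_ite_lt N (N-(s+1)) (by omega)]
          have heval : ∀ l ∈ Finset.range (N-(s+1)),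
              F (l*M+((M-t)+m))
              = (u l * (starRingEnd ℂ) (v (l+(s+1))))
                * (wPB ((M-t)+m) * wPA (M-1-m) - wPA ((M-t)+m) * wPB (M-1-m)) := by
            intro l hl
            rw [Finset.mem_range] at hl
            have e1 : l*M+((M-t)+m)+τ = L+(l+(s+1))*M+m := by
              have a1 : (l+(s+1))*M = l*M+s*M+M := by ring
              omega
            simp only [hF]
            rw [e1, hA1 l (by omega) ((M-t)+m) (by omega),
                hA2 (l+(s+1)) (by omega) m (by omega),
                hB1 l (by omega) ((M-t)+m) (by omega),
                hB2 (l+(s+1)) (by omega) m (by omega)]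
            simp only [map_mul, map_neg, Complex.conj_conj]
            ring
          rw [Finset.sum_congr rfl heval, ← Finset.sum_mul]
        rw [Finset.sum_congr rfl inner2, ← Finset.mul_sum,
            Xsum' M t (le_of_lt ht) wPA wPB, mul_zero]
      rw [part1, part2, add_zero]
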